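/- The Cauchy product of the SFTR-1/2 weights (ω_m) and the sequence (θ_m) equals the coefficient sequence of 1 − ξ: setting c_m = Σ_{s=0}^{m} ω_s · θ_{m−s}, one has c_0 = 1, c_1 = −1, and c_m = 0 for every integer m ≥ 2. -/
import Mathlib


/-- The SFTR-1/2 weights `ω_m`. -/
noncomputable def sftrW (α : ℝ) : ℕ → ℝ
  | 0 => (2 * α / (α + 1)) ^ α
  | 1 => -α * (2 * α / (α + 1)) ^ (α + 1)
  | (m + 2) =>
      2 * α / (((m : ℝ) + 2) * (α + 1)) *
        (((((m : ℝ) + 2) - 1) / α - α) * sftrW α (m + 1) +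
          (α - 1) / (2 * α) * (((m : ℝ) + 2) - 2) * sftrW α m)

/-- The sequence `θ_m`. -/
noncomputable def seqTheta (α : ℝ) : ℕ → ℝ
  | 0 => ((α + 1) / (2 * α)) ^ α
  | 1 => (α - 1) * (2 * α + 1) / (α + 1) * seqTheta α 0
  | (m + 2) =>
      2 * α / (((m : ℝ) + 2) * (1 + α)) *
        (((((m : ℝ) + 2) - 1) / α - (1 - α) / (2 * α) * (2 * α + 1)) * seqTheta α (m + 1) +
          (1 - α) / (2 * α) * (3 - ((m : ℝ) + 2)) * seqTheta α m)

noncomputable def pS (α : ℝ) (n : ℕ) : ℝ :=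
  ∑ s ∈ Finset.range (n+1), sftrW α s * seqTheta α (n - s)

noncomputable def sA (α : ℝ) (n : ℕ) : ℝ :=
  ∑ s ∈ Finset.range (n+1), (s:ℝ) * sftrW α s * seqTheta α (n - s)

noncomputable def sB (α : ℝ) (n : ℕ) : ℝ :=
  ∑ s ∈ Finset.range (n+1), (s:ℝ) * seqTheta α s * sftrW α (n - s)

lemma flip_sum (g : ℕ → ℕ → ℝ) (n : ℕ) :
    ∑ s ∈ Finset.range (n+1), g s (n - s) = ∑ s ∈ Finset.range (n+1), g (n - s) s := by
  rw [← Finset.sum_range_reflect (fun s => g s (n - s)) (n+1)]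
  apply Finset.sum_congr rfl
  intro j hj
  rw [Finset.mem_range, Nat.lt_succ_iff] at hj
  simp [Nat.sub_sub_self hj]

lemma pS_flip (α : ℝ) (n : ℕ) :
    pS α n = ∑ s ∈ Finset.range (n+1), seqTheta α s * sftrW α (n - s) := by
  rw [pS, flip_sum (fun a b => sftrW α a * seqTheta α b) n]
  exact Finset.sum_congr rfl fun j _ => mul_comm _ _

lemma sAB (α : ℝ) (n : ℕ) : sA α n + sB α n = (n:ℝ) * pS α n := by
  rw [sA, sB, flip_sum (fun a b => (a:ℝ) * seqTheta α a * sftrW α b) n, pS,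
    Finset.mul_sum, ← Finset.sum_add_distrib]
  apply Finset.sum_congr rfl
  intro j hj
  rw [Finset.mem_range, Nat.lt_succ_iff] at hj
  have : ((n - j : ℕ) : ℝ) = (n:ℝ) - (j:ℝ) := by
    push_cast [hj]; ring
  rw [this]; ring

lemma sA_succ (α : ℝ) (k : ℕ) :
    sA α (k+1) = ∑ s ∈ Finset.range (k+1), ((s:ℝ)+1) * sftrW α (s+1) * seqTheta α (k-s) := by
  rw [sA, Finset.sum_range_succ']
  simp [Nat.succ_sub_succ]

lemma sB_succ (α : ℝ) (k : ℕ) :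
    sB α (k+1) = ∑ s ∈ Finset.range (k+1), ((s:ℝ)+1) * seqTheta α (s+1) * sftrW α (k-s) := by
  rw [sB, Finset.sum_range_succ']
  simp [Nat.succ_sub_succ]

lemma pS_succ (α : ℝ) (k : ℕ) :
    pS α (k+1) = (∑ s ∈ Finset.range (k+1), sftrW α (s+1) * seqTheta α (k-s))
      + sftrW α 0 * seqTheta α (k+1) := by
  rw [pS, Finset.sum_range_succ']
  simp [Nat.succ_sub_succ]

lemma pS_succ' (α : ℝ) (k : ℕ) :
    pS α (k+1) = (∑ s ∈ Finset.range (k+1), seqTheta α (s+1) * sftrW α (k-s))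
      + seqTheta α 0 * sftrW α (k+1) := by
  rw [pS_flip, Finset.sum_range_succ']
  simp [Nat.succ_sub_succ]
section lemmas
variable {α : ℝ} (hα : α ∈ Set.Ioo (0:ℝ) 1)
include hα

lemma hW_rec (k : ℕ) :
    (1 + α) * ((k:ℝ) + 2) * sftrW α (k+2) =
      (2 * ((k:ℝ) + 1) - 2 * α ^ 2) * sftrW α (k+1) + (α - 1) * (k:ℝ) * sftrW α k := by
  obtain ⟨h0, h1⟩ := hα
  have hk : ((k:ℝ) + 2) ≠ 0 := by positivity
  have ha : α ≠ 0 := ne_of_gt h0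
  have ha1 : α + 1 ≠ 0 := by positivity
  rw [show sftrW α (k+2) = 2 * α / (((k : ℝ) + 2) * (α + 1)) *
        (((((k : ℝ) + 2) - 1) / α - α) * sftrW α (k + 1) +
          (α - 1) / (2 * α) * (((k : ℝ) + 2) - 2) * sftrW α k) from rfl]
  field_simp
  ring

lemma hW1 : (1 + α) * sftrW α 1 = -2 * α ^ 2 * sftrW α 0 := by
  obtain ⟨h0, h1⟩ := hα
  have hc : (0:ℝ) < 2 * α / (α + 1) := by positivity
  rw [show sftrW α 1 = -α * (2 * α / (α + 1)) ^ (α + 1) from rfl,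
      show sftrW α 0 = (2 * α / (α + 1)) ^ α from rfl,
      Real.rpow_add hc, Real.rpow_one]
  have ha1 : α + 1 ≠ 0 := by positivity
  field_simp
  ring

lemma hT_rec (k : ℕ) :
    (1 + α) * ((k:ℝ) + 2) * seqTheta α (k+2) =
      (2 * ((k:ℝ) + 1) - (1 - α) * (2 * α + 1)) * seqTheta α (k+1) +
        (1 - α) * (1 - (k:ℝ)) * seqTheta α k := by
  obtain ⟨h0, h1⟩ := hα
  have hk : ((k:ℝ) + 2) ≠ 0 := by positivity
  have ha : α ≠ 0 := ne_of_gt h0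
  have ha1 : (1 + α) ≠ 0 := by positivity
  rw [show seqTheta α (k+2) = 2 * α / (((k : ℝ) + 2) * (1 + α)) *
        (((((k : ℝ) + 2) - 1) / α - (1 - α) / (2 * α) * (2 * α + 1)) * seqTheta α (k + 1) +
          (1 - α) / (2 * α) * (3 - ((k : ℝ) + 2)) * seqTheta α k) from rfl]
  field_simp
  ring

lemma hT1 : (1 + α) * seqTheta α 1 = -(1 - α) * (2 * α + 1) * seqTheta α 0 := by
  obtain ⟨h0, h1⟩ := hα
  have ha1 : α + 1 ≠ 0 := by positivity
  rw [show seqTheta α 1 = (α - 1) * (2 * α + 1) / (α + 1) * seqTheta α 0 from rfl]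
  field_simp
  ring

lemma hWT0 : sftrW α 0 * seqTheta α 0 = 1 := by
  obtain ⟨h0, h1⟩ := hα
  rw [show sftrW α 0 = (2 * α / (α + 1)) ^ α from rfl,
      show seqTheta α 0 = ((α + 1) / (2 * α)) ^ α from rfl,
      ← Real.mul_rpow (by positivity) (by positivity)]
  rw [show 2 * α / (α + 1) * ((α + 1) / (2 * α)) = 1 by
    field_simp]
  exact Real.one_rpow α


lemma sumA (k : ℕ) :
    ∑ s ∈ Finset.range (k+2+1), (1+α)*(s:ℝ)*sftrW α s*seqTheta α (k+2-s)
      = 2*sA α (k+1) - 2*α^2*pS α (k+1) + (α-1)*sA α k := by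
  rw [Finset.sum_range_succ', Finset.sum_range_succ']
  have e1 : ∀ s ∈ Finset.range (k+1),
      (1+α)*((s+1+1:ℕ):ℝ)*sftrW α (s+1+1)*seqTheta α (k+2-(s+1+1))
        = 2*(((s:ℝ)+1) * sftrW α (s+1) * seqTheta α (k-s))
          - 2*α^2*(sftrW α (s+1) * seqTheta α (k-s))
          + (α-1)*((s:ℝ)*sftrW α s*seqTheta α (k-s)) := by
    intro s _
    have h2 : k+2-(s+1+1) = k - s := by omega
    rw [h2]
    have hr := hW_rec hα s
    push_cast
    linear_combination seqTheta α (k-s) * hr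
  rw [Finset.sum_congr rfl e1]
  simp only [Finset.sum_add_distrib, Finset.sum_sub_distrib, ← Finset.mul_sum]
  rw [← sA_succ, ← sA]
  have hp : ∑ s ∈ Finset.range (k+1), sftrW α (s+1) * seqTheta α (k-s)
      = pS α (k+1) - sftrW α 0 * seqTheta α (k+1) := by
    rw [pS_succ]; ring
  rw [hp]
  have h1 := hW1 hα
  norm_num
  linear_combination seqTheta α (k+1) * h1

lemma sumB (k : ℕ) :
    ∑ s ∈ Finset.range (k+2+1), (1+α)*(s:ℝ)*seqTheta α s*sftrW α (k+2-s)
      = 2*sB α (k+1) - (1-α)*(2*α+1)*pS α (k+1) + (1-α)*(pS α k - sB α k) := by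
  rw [Finset.sum_range_succ', Finset.sum_range_succ']
  have e1 : ∀ s ∈ Finset.range (k+1),
      (1+α)*((s+1+1:ℕ):ℝ)*seqTheta α (s+1+1)*sftrW α (k+2-(s+1+1))
        = 2*(((s:ℝ)+1) * seqTheta α (s+1) * sftrW α (k-s))
          - (1-α)*(2*α+1)*(seqTheta α (s+1) * sftrW α (k-s))
          + ((1-α)*(seqTheta α s * sftrW α (k-s))
          - (1-α)*((s:ℝ)*seqTheta α s*sftrW α (k-s))) := by
    intro s _
    have h2 : k+2-(s+1+1) = k - s := by omega
    rw [h2]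
    have hr := hT_rec hα s
    push_cast
    linear_combination sftrW α (k-s) * hr
  rw [Finset.sum_congr rfl e1]
  simp only [Finset.sum_add_distrib, Finset.sum_sub_distrib, ← Finset.mul_sum]
  rw [← sB_succ, ← sB, ← pS_flip]
  have hp : ∑ s ∈ Finset.range (k+1), seqTheta α (s+1) * sftrW α (k-s)
      = pS α (k+1) - seqTheta α 0 * sftrW α (k+1) := by
    rw [pS_succ']; ring
  rw [hp]
  have h1 := hT1 hα
  norm_num
  linear_combination sftrW α (k+1) * h1

lemma pS_rec (k : ℕ) :
    (1+α) * ((k:ℝ)+2) * pS α (k+2) =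
      (2*((k:ℝ)+2) - 3 - α) * pS α (k+1) + (1-α)*(1-(k:ℝ)) * pS α k := by
  have hsplit : ∀ s ∈ Finset.range (k+2+1),
      (1+α)*((k:ℝ)+2)*(sftrW α s * seqTheta α (k+2-s))
        = (1+α)*(s:ℝ)*sftrW α s*seqTheta α (k+2-s)
          + (1+α)*((k+2-s:ℕ):ℝ)*seqTheta α (k+2-s)*sftrW α s := by
    intro s hs
    rw [Finset.mem_range, Nat.lt_succ_iff] at hs
    have hc : ((k+2-s:ℕ):ℝ) = (k:ℝ)+2-(s:ℝ) := by
      rw [Nat.cast_sub hs]; push_cast; ring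
    rw [hc]; ring
  calc (1+α)*((k:ℝ)+2) * pS α (k+2)
      = ∑ s ∈ Finset.range (k+2+1), (1+α)*((k:ℝ)+2)*(sftrW α s * seqTheta α (k+2-s)) := by
        rw [pS, Finset.mul_sum]
    _ = ∑ s ∈ Finset.range (k+2+1),
          ((1+α)*(s:ℝ)*sftrW α s*seqTheta α (k+2-s)
            + (1+α)*((k+2-s:ℕ):ℝ)*seqTheta α (k+2-s)*sftrW α s) :=
        Finset.sum_congr rfl hsplit
    _ = (∑ s ∈ Finset.range (k+2+1), (1+α)*(s:ℝ)*sftrW α s*seqTheta α (k+2-s))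
          + ∑ s ∈ Finset.range (k+2+1), (1+α)*((k+2-s:ℕ):ℝ)*seqTheta α (k+2-s)*sftrW α s :=
        Finset.sum_add_distrib
    _ = (∑ s ∈ Finset.range (k+2+1), (1+α)*(s:ℝ)*sftrW α s*seqTheta α (k+2-s))
          + ∑ s ∈ Finset.range (k+2+1), (1+α)*(s:ℝ)*seqTheta α s*sftrW α (k+2-s) := by
        rw [flip_sum (fun a b => (1+α)*(a:ℝ)*seqTheta α a*sftrW α b) (k+2)]
    _ = (2*sA α (k+1) - 2*α^2*pS α (k+1) + (α-1)*sA α k)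
          + (2*sB α (k+1) - (1-α)*(2*α+1)*pS α (k+1) + (1-α)*(pS α k - sB α k)) := by
        rw [sumA hα k, sumB hα k]
    _ = (2*((k:ℝ)+2) - 3 - α) * pS α (k+1) + (1-α)*(1-(k:ℝ)) * pS α k := by
        have h1 := sAB α (k+1)
        have h2 := sAB α k
        push_cast at h1 h2
        linear_combination 2*h1 + (α-1)*h2

lemma pS_zero : pS α 0 = 1 := by
  rw [pS, Finset.sum_range_one]
  exact hWT0 hα

lemma pS_one : pS α 1 = -1 := by
  have hne : (1+α) ≠ 0 := by obtain ⟨h0, _⟩ := hα; positivity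
  apply mul_left_cancel₀ hne
  rw [pS, Finset.sum_range_succ, Finset.sum_range_one]
  have h1 := hW1 hα
  have h2 := hT1 hα
  have h3 := hWT0 hα
  show (1+α) * (sftrW α 0 * seqTheta α 1 + sftrW α 1 * seqTheta α 0) = (1+α) * (-1)
  linear_combination sftrW α 0 * h2 + seqTheta α 0 * h1 - (1+α) * h3

lemma pS_two_step : ∀ k : ℕ, pS α (k+2) = 0 := by
  intro k
  induction k using Nat.strong_induction_on with
  | _ k ih =>
    have hk := pS_rec hα k
    have hne : (1+α)*((k:ℝ)+2) ≠ 0 := by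
      obtain ⟨h0, _⟩ := hα; positivity
    have hres : ∀ (h : (2*((k:ℝ)+2) - 3 - α) * pS α (k+1) + (1-α)*(1-(k:ℝ)) * pS α k = 0),
        pS α (k+2) = 0 := fun h =>
      (mul_eq_zero.mp (hk.trans h)).resolve_left hne
    match k, ih with
    | 0, _ =>
      apply hres
      rw [pS_one hα, pS_zero hα]
      norm_num
    | 1, ih =>
      apply hres
      have := ih 0 (by omega)
      rw [show (1:ℕ)+1 = 0+2 from rfl, this, pS_one hα]
      norm_num
    | (j+2), ih =>
      apply hres
      have e1 := ih (j+1) (by omega)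
      have e2 := ih j (by omega)
      rw [show (j+2)+1 = (j+1)+2 from rfl, e1, e2]
      ring

end lemmas


theorem cauchy_product_eq (α : ℝ) (hα : α ∈ Set.Ioo (0 : ℝ) 1) :
    (∑ s ∈ Finset.range 1, sftrW α s * seqTheta α (0 - s)) = 1 ∧
    (∑ s ∈ Finset.range 2, sftrW α s * seqTheta α (1 - s)) = -1 ∧
    ∀ m : ℕ, 2 ≤ m → (∑ s ∈ Finset.range (m + 1), sftrW α s * seqTheta α (m - s)) = 0 := by
  refine ⟨pS_zero hα, pS_one hα, ?_⟩
  intro m hm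
  obtain ⟨k, rfl⟩ : ∃ k, m = k + 2 := ⟨m - 2, by omega⟩
  exact pS_two_step hα k
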